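/- Let λ be a partition with at most N parts and T a column-strict tableau of shape λ given by the chain ∅ = λ^{(0)} ⊂ ⋯ ⊂ λ^{(N)} = λ, with θ_{i,k} := λ^{(k)}_i − λ^{(k−1)}_i. Work in the fraction field of ℚ(𝔱)[[q]], where f(u) := (𝔱u;q)_∞/(qu;q)_∞ is a well-defined unit for every u of the form q^m 𝔱^r with integers m, r ≥ 0. Then ∏_{k=1}^{N} ∏_{1≤i≤j≤k−1} [f(q^{λ^{(k−1)}_i−λ^{(k−1)}_j} 𝔱^{j−i}) · f(q^{λ^{(k)}_i−λ^{(k)}_{j+1}} 𝔱^{j−i})] / [f(q^{λ^{(k)}_i−λ^{(k−1)}_j} 𝔱^{j−i}) · f(q^{λ^{(k−1)}_i−λ^{(k)}_{j+1}} 𝔱^{j−i})] = ∏_{k=1}^{N} ∏_{1≤i≤j≤k−1} [(q^{−λ^{(k)}_i+λ^{(k−1)}_j+1} 𝔱^{i−j−1};q)_{θ_{i,k}} / (q^{−λ^{(k)}_i+λ^{(k−1)}_j} 𝔱^{i−j};q)_{θ_{i,k}}] · [(q^{−λ^{(k)}_i+λ^{(k)}_{j+1}} 𝔱^{i−j};q)_{θ_{i,k}}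 / (q^{−λ^{(k)}_i+λ^{(k)}_{j+1}+1} 𝔱^{i−j−1};q)_{θ_{i,k}}]; in other words, the Macdonald tableau coefficient ψ_T(q,𝔱) = ∏_{k=1}^N ψ_{λ^{(k)}/λ^{(k−1)}}(q,𝔱) admits this closed finite q-Pochhammer product expression. -/

import Mathlib

/-!
STATEMENT 9: the Macdonald tableau coefficient `ψ_T = ∏_k ψ_{λ⁽ᵏ⁾/λ⁽ᵏ⁻¹⁾}`,
written via `f(u) = (𝔱u;q)_∞/(qu;q)_∞`, equals the closed finite q-Pochhammer
product.  We work in the fraction field `F` of `ℚ(𝔱)[[q]]`; the infinite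
products `(a;q)_∞` are defined coefficientwise in `ℚ(𝔱)[[q]]`.
-/

noncomputable section
open Finset

/-- The q-Pochhammer symbol `(a;q)_n`. -/
def qPoch {K : Type*} [CommRing K] (a q : K) (n : ℕ) : K :=
  ∏ k ∈ Finset.range n, (1 - a * q ^ k)

/-- The infinite product `(a;q)_∞ = ∏_{k≥0}(1 − a q^k)` in `R[[q]]`, defined
coefficientwise (valid for `a` of nonnegative `q`-adic order). -/
def PochInf {K : Type*} [CommRing K] (a : PowerSeries K) : PowerSeries K :=
  PowerSeries.mk fun n =>
    PowerSeries.coeff n (∏ k ∈ Finset.range (n+1), (1 - a * (PowerSeries.X)^k))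

/-- `Λ` encodes a column-strict tableau of shape `lam`. -/
def IsTab (N : ℕ) (lam : ℕ → ℕ) (Λ : ℕ → ℕ → ℕ) : Prop :=
  (∀ k i, ¬(1 ≤ i ∧ i ≤ k ∧ k ≤ N) → Λ k i = 0) ∧
  (∀ i, 1 ≤ i → Λ N i = lam i) ∧
  (∀ k, 1 ≤ k → k ≤ N → ∀ i, 1 ≤ i → Λ (k-1) i ≤ Λ k i ∧ Λ k (i+1) ≤ Λ (k-1) i)

/-- `ℚ(𝔱)`. -/
abbrev Kt := RatFunc ℚ
/-- `𝔱`. -/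
def tv : Kt := RatFunc.X
/-- the fraction field of `ℚ(𝔱)[[q]]`. -/
abbrev F9 := FractionRing (PowerSeries Kt)

def ι : PowerSeries Kt →+* F9 := algebraMap (PowerSeries Kt) F9

/-- `q ∈ F`. -/
def qF : F9 := ι PowerSeries.X
/-- `𝔱 ∈ F`. -/
def tF : F9 := ι (PowerSeries.C tv)

/-- `f(q^m 𝔱^r) = (𝔱 q^m 𝔱^r;q)_∞ / (q q^m 𝔱^r;q)_∞ ∈ F`. -/
def fMac (m r : ℕ) : F9 :=
  ι (PochInf (PowerSeries.X ^ m * PowerSeries.C (tv ^ (r+1)))) /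
  ι (PochInf (PowerSeries.X ^ (m+1) * PowerSeries.C (tv ^ r)))


/-! ### Auxiliary lemmas -/

namespace PsiAux

open PowerSeries

variable {K : Type*} [CommRing K]

/-- truncated product -/
def PP (a : K⟦X⟧) (n : ℕ) : K⟦X⟧ := ∏ k ∈ range n, (1 - a * X ^ k)

lemma coeff_mul_one_sub_high (u a : K⟦X⟧) {n m : ℕ} (h : n < m) :
    coeff n (u * (1 - a * X ^ m)) = coeff n u := by
  rw [mul_sub, mul_one, map_sub]
  have : u * (a * X ^ m) = (u * a) * X ^ m := by ring
  rw [this, PowerSeries.coeff_mul_X_pow', if_neg (by omega), sub_zero]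

lemma coeff_PP_stab (a : K⟦X⟧) {n m : ℕ} (h : n < m) :
    coeff n (PP a m) = coeff n (PP a (n+1)) := by
  induction m with
  | zero => omega
  | succ m ih =>
    rcases Nat.lt_or_ge n m with hm | hm
    · rw [PP, prod_range_succ, ← PP, coeff_mul_one_sub_high _ _ hm, ih hm]
    · have : m = n := by omega
      subst this; rfl

lemma coeff_PochInf (a : K⟦X⟧) {n m : ℕ} (h : n < m) :
    coeff n (PochInf a) = coeff n (PP a m) := by
  rw [coeff_PP_stab a h, PochInf, coeff_mk, PP]

lemma coeff_mul_congr (u v w : K⟦X⟧) {n : ℕ} (h : ∀ j ≤ n, coeff j v = coeff j w) :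
    coeff n (u * v) = coeff n (u * w) := by
  rw [PowerSeries.coeff_mul, PowerSeries.coeff_mul]
  refine Finset.sum_congr rfl fun p hp => ?_
  rw [Finset.HasAntidiagonal.mem_antidiagonal] at hp
  rw [h p.2 (by omega)]

set_option maxHeartbeats 1000000 in
lemma PochInf_step (a : K⟦X⟧) : PochInf a = (1 - a) * PochInf (a * X) := by
  ext n
  have h1 : coeff n (PochInf a) = coeff n (PP a (n+2)) := coeff_PochInf a (by omega)
  have h2 : PP a (n+2) = (1 - a) * PP (a * X) (n+1) := by
    have e : ∀ k : ℕ, 1 - a * X ^ (k+1) = 1 - (a * X) * X ^ k := fun k => by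
      rw [pow_succ', ← mul_assoc]
    calc PP a (n+2) = (∏ k ∈ range (n+1), (1 - (a*X) * X ^ k)) * (1 - a * X ^ 0) := by
          rw [PP, Finset.prod_range_succ']
          exact congrArg (· * _) (Finset.prod_congr rfl fun k _ => e k)
      _ = (1 - a) * PP (a * X) (n+1) := by rw [pow_zero, mul_one, mul_comm, PP]
  rw [h1, h2]
  exact (coeff_mul_congr (n := n) (1-a) (PP (a*X) (n+1)) (PochInf (a*X)) fun j hj =>
    (coeff_PochInf (a*X) (show j < n+1 by omega)).symm)

lemma PochInf_telescope (a : K⟦X⟧) (θ : ℕ) :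
    PochInf a = PP a θ * PochInf (a * X ^ θ) := by
  induction θ with
  | zero => simp [PP]
  | succ m ih =>
    rw [ih, PochInf_step (a * X ^ m),
      show a * X ^ m * X = a * X ^ (m+1) by rw [mul_assoc, ← pow_succ]]
    rw [show PP a (m+1) = PP a m * (1 - a * X ^ m) from Finset.prod_range_succ _ m, mul_assoc]

lemma hι : Function.Injective ι := IsFractionRing.injective (PowerSeries Kt) F9

lemma tv_pow_ne_one {s : ℕ} (hs : 1 ≤ s) : tv ^ s ≠ 1 := by
  intro h
  have h2 : (algebraMap (Polynomial ℚ) Kt) (Polynomial.X ^ s) = algebraMap (Polynomial ℚ) Kt 1 := by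
    rw [map_one, map_pow]
    exact h
  have := IsFractionRing.injective (Polynomial ℚ) Kt h2
  have hd := congrArg Polynomial.natDegree this
  simp [Polynomial.natDegree_X_pow] at hd
  omega

lemma qF_ne : qF ≠ 0 := by
  simp only [qF, ne_eq, map_eq_zero_iff ι hι]
  exact PowerSeries.X_ne_zero

lemma tF_ne : tF ≠ 0 := by
  simp only [tF, ne_eq, map_eq_zero_iff ι hι, ← map_zero (PowerSeries.C (R := Kt))]
  exact fun h => RatFunc.X_ne_zero (PowerSeries.C_injective h)

/-- the base power series -/
def bs (m s : ℕ) : PowerSeries Kt := PowerSeries.X ^ m * PowerSeries.C (tv ^ s)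

lemma coeff0_PochInf (a : PowerSeries Kt) :
    PowerSeries.coeff 0 (PochInf a) = 1 - PowerSeries.coeff 0 a := by
  rw [PochInf, coeff_mk, Finset.prod_range_one, pow_zero, mul_one, map_sub]
  simp

lemma gP_ne {m s : ℕ} (h : 1 ≤ m ∨ 1 ≤ s) : PochInf (bs m s) ≠ 0 := by
  intro h0
  have hc := coeff0_PochInf (bs m s)
  rw [h0, map_zero] at hc
  rcases h with hm | hs
  · rw [bs, PowerSeries.coeff_X_pow_mul' _ m 0, if_neg (by omega)] at hc
    simp at hc
  · rcases Nat.eq_zero_or_pos m with hm | hm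
    · subst hm
      rw [bs, pow_zero, one_mul, PowerSeries.coeff_zero_C] at hc
      have : tv ^ s = 1 := by linear_combination hc
      exact tv_pow_ne_one hs this
    · rw [bs, PowerSeries.coeff_X_pow_mul' _ m 0, if_neg (by omega)] at hc
      simp at hc

/-- `g m s = ι (PochInf (X^m C t^s))`. -/
def g (m s : ℕ) : F9 := ι (PochInf (bs m s))

lemma g_ne {m s : ℕ} (h : 1 ≤ m ∨ 1 ≤ s) : g m s ≠ 0 := by
  simpa [g, ne_eq, map_eq_zero_iff ι hι] using gP_ne h

lemma ι_PP (m s θ : ℕ) : ι (PP (bs m s) θ) = qPoch (qF ^ m * tF ^ s) qF θ := by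
  rw [PP, qPoch, map_prod]
  refine Finset.prod_congr rfl fun k _ => ?_
  simp only [map_sub, map_one, map_mul, bs, map_pow, qF, tF]

lemma g_telescope (m s θ : ℕ) : g m s = qPoch (qF ^ m * tF ^ s) qF θ * g (m + θ) s := by
  rw [g, PochInf_telescope (bs m s) θ, map_mul, ι_PP, g]
  congr 2
  rw [bs, bs, mul_assoc, mul_comm (PowerSeries.C (tv ^ s)), ← mul_assoc, ← pow_add]

lemma qPoch_pos_eq (m s θ : ℕ) (h : 1 ≤ m ∨ 1 ≤ s) :
    qPoch (qF ^ m * tF ^ s) qF θ = g m s / g (m + θ) s := by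
  rw [g_telescope m s θ, mul_div_assoc, div_self (g_ne (by omega)), mul_one]

lemma qPoch_pos_ne (m s θ : ℕ) (h : 1 ≤ m ∨ 1 ≤ s) :
    qPoch (qF ^ m * tF ^ s) qF θ ≠ 0 := by
  rw [qPoch_pos_eq m s θ h]
  exact div_ne_zero (g_ne h) (g_ne (by omega))

lemma fMac_eq (m r : ℕ) : fMac m r = g m (r+1) / g (m+1) r := rfl

lemma qPoch_reflect (c : F9) (hc : c ≠ 0) (θ : ℕ) :
    qPoch ((c * qF ^ ((θ:ℤ) - 1))⁻¹) qF θ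
      = (∏ k ∈ range θ, (-(c * qF ^ k)⁻¹)) * qPoch c qF θ := by
  rw [qPoch, qPoch, ← prod_mul_distrib,
    ← prod_range_reflect (fun j => 1 - (c * qF ^ ((θ:ℤ) - 1))⁻¹ * qF ^ j) θ]
  refine prod_congr rfl fun j hj => ?_
  rw [mem_range] at hj
  have hqz : qF ≠ 0 := qF_ne
  have h1 : (c * qF ^ ((θ:ℤ) - 1))⁻¹ * qF ^ (θ - 1 - j) = (c * qF ^ j)⁻¹ := by
    rw [mul_inv, mul_inv, ← zpow_natCast qF (θ - 1 - j), ← zpow_natCast qF j,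
      ← zpow_neg, ← zpow_neg, mul_assoc, ← zpow_add₀ hqz]
    congr 1
    · congr 1
      omega
  rw [h1]
  have hx : c * qF ^ j ≠ 0 := mul_ne_zero hc (pow_ne_zero _ qF_ne)
  have hix : (c * qF ^ j)⁻¹ * (c * qF ^ j) = 1 := inv_mul_cancel₀ hx
  linear_combination -hix

lemma key_frac (P1 P2 P3 P4 A B C D : F9) (h2 : P2 ≠ 0) (h4 : P4 ≠ 0)
    (hB : B ≠ 0) (hD : D ≠ 0) (hp : P1 * P3 = P2 * P4) :
    (P1 * A / (P2 * B)) * (P3 * C / (P4 * D)) = (A / B) * (C / D) := by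
  rw [div_mul_div_comm, div_mul_div_comm]
  have e1 : P1 * A * (P3 * C) = (P1 * P3) * (A * C) := by ring
  have e2 : P2 * B * (P4 * D) = (P2 * P4) * (B * D) := by ring
  rw [e1, e2, hp, mul_div_mul_left _ _ (mul_ne_zero h2 h4)]

lemma inv_arg (m s θ : ℕ) :
    qF ^ (1 - (m:ℤ) - θ) * tF ^ (-(s:ℤ)) = ((qF ^ m * tF ^ s) * qF ^ ((θ:ℤ) - 1))⁻¹ := by
  rw [mul_inv, mul_inv, ← zpow_natCast qF m, ← zpow_natCast tF s, ← zpow_neg, ← zpow_neg,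
    ← zpow_neg, mul_right_comm, ← zpow_add₀ qF_ne]
  congr 2
  ring

lemma pref_cancel (a1 b0 s θ : ℕ) :
    (∏ k ∈ range θ, (-(qF ^ a1 * tF ^ (s+1) * qF ^ k)⁻¹)) *
      (∏ k ∈ range θ, (-(qF ^ (b0+1) * tF ^ s * qF ^ k)⁻¹))
    = (∏ k ∈ range θ, (-(qF ^ (a1+1) * tF ^ s * qF ^ k)⁻¹)) *
      (∏ k ∈ range θ, (-(qF ^ b0 * tF ^ (s+1) * qF ^ k)⁻¹)) := by
  rw [← prod_mul_distrib, ← prod_mul_distrib]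
  refine prod_congr rfl fun k _ => ?_
  rw [neg_mul_neg, neg_mul_neg, ← mul_inv, ← mul_inv]
  congr 1
  ring

set_option synthInstance.maxHeartbeats 1000000 in
set_option maxHeartbeats 2000000 in
lemma term_eq (θ a1 b0 s : ℕ) :
    (fMac a1 s * fMac (b0+θ) s) / (fMac (a1+θ) s * fMac b0 s)
    = (qPoch (qF ^ (1 - (a1:ℤ) - θ) * tF ^ (-(s:ℤ) - 1)) qF θ /
       qPoch (qF ^ (-(a1:ℤ) - θ) * tF ^ (-(s:ℤ))) qF θ) *
      (qPoch (qF ^ (-(b0:ℤ) - θ) * tF ^ (-(s:ℤ))) qF θ /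
       qPoch (qF ^ (1 - (b0:ℤ) - θ) * tF ^ (-(s:ℤ) - 1)) qF θ) := by
  have hc1 : qF ^ a1 * tF ^ (s+1) ≠ 0 :=
    mul_ne_zero (pow_ne_zero _ qF_ne) (pow_ne_zero _ tF_ne)
  have hc2 : qF ^ (a1+1) * tF ^ s ≠ 0 :=
    mul_ne_zero (pow_ne_zero _ qF_ne) (pow_ne_zero _ tF_ne)
  have hc3 : qF ^ (b0+1) * tF ^ s ≠ 0 :=
    mul_ne_zero (pow_ne_zero _ qF_ne) (pow_ne_zero _ tF_ne)
  have hc4 : qF ^ b0 * tF ^ (s+1) ≠ 0 :=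
    mul_ne_zero (pow_ne_zero _ qF_ne) (pow_ne_zero _ tF_ne)
  have e1 : qF ^ (1 - (a1:ℤ) - θ) * tF ^ (-(s:ℤ) - 1)
      = ((qF ^ a1 * tF ^ (s+1)) * qF ^ ((θ:ℤ) - 1))⁻¹ := by
    rw [← inv_arg a1 (s+1) θ]
    congr 1
    congr 1; omega
  have e2 : qF ^ (-(a1:ℤ) - θ) * tF ^ (-(s:ℤ))
      = ((qF ^ (a1+1) * tF ^ s) * qF ^ ((θ:ℤ) - 1))⁻¹ := by
    rw [← inv_arg (a1+1) s θ]
    congr 1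
    congr 1; omega
  have e3 : qF ^ (-(b0:ℤ) - θ) * tF ^ (-(s:ℤ))
      = ((qF ^ (b0+1) * tF ^ s) * qF ^ ((θ:ℤ) - 1))⁻¹ := by
    rw [← inv_arg (b0+1) s θ]
    congr 1
    congr 1; omega
  have e4 : qF ^ (1 - (b0:ℤ) - θ) * tF ^ (-(s:ℤ) - 1)
      = ((qF ^ b0 * tF ^ (s+1)) * qF ^ ((θ:ℤ) - 1))⁻¹ := by
    rw [← inv_arg b0 (s+1) θ]
    congr 1
    congr 1; omega
  rw [e1, e2, e3, e4, qPoch_reflect _ hc1, qPoch_reflect _ hc2, qPoch_reflect _ hc3,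
    qPoch_reflect _ hc4]
  rw [key_frac _ _ _ _ _ _ _ _
    (prod_ne_zero_iff.2 fun k _ => neg_ne_zero.2 (inv_ne_zero
      (mul_ne_zero hc2 (pow_ne_zero _ qF_ne))))
    (prod_ne_zero_iff.2 fun k _ => neg_ne_zero.2 (inv_ne_zero
      (mul_ne_zero hc4 (pow_ne_zero _ qF_ne))))
    (qPoch_pos_ne (a1+1) s θ (Or.inl (by omega)))
    (qPoch_pos_ne b0 (s+1) θ (Or.inr (by omega)))
    (pref_cancel a1 b0 s θ)]
  rw [qPoch_pos_eq a1 (s+1) θ (Or.inr (by omega)),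
    qPoch_pos_eq (a1+1) s θ (Or.inl (by omega)),
    qPoch_pos_eq (b0+1) s θ (Or.inl (by omega)),
    qPoch_pos_eq b0 (s+1) θ (Or.inr (by omega))]
  simp only [fMac_eq]
  have n1 : g a1 (s+1) ≠ 0 := g_ne (Or.inr (by omega))
  have n2 : g (a1+1) s ≠ 0 := g_ne (Or.inl (by omega))
  have n3 : g (a1+θ) (s+1) ≠ 0 := g_ne (Or.inr (by omega))
  have n4 : g (a1+θ+1) s ≠ 0 := g_ne (Or.inl (by omega))
  have n5 : g b0 (s+1) ≠ 0 := g_ne (Or.inr (by omega))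
  have n6 : g (b0+1) s ≠ 0 := g_ne (Or.inl (by omega))
  have n7 : g (b0+θ) (s+1) ≠ 0 := g_ne (Or.inr (by omega))
  have n8 : g (b0+θ+1) s ≠ 0 := g_ne (Or.inl (by omega))
  have h14 : a1 + 1 + θ = a1 + θ + 1 := by omega
  have h58 : b0 + 1 + θ = b0 + θ + 1 := by omega
  rw [h14, h58]
  field_simp

lemma tab_anti {N : ℕ} {lam : ℕ → ℕ} {Λ : ℕ → ℕ → ℕ} (hT : IsTab N lam Λ)
    (k : ℕ) (hk1 : 1 ≤ k) (hkN : k ≤ N) :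
    ∀ i j : ℕ, 1 ≤ i → i ≤ j → Λ k j ≤ Λ k i ∧ Λ (k-1) j ≤ Λ (k-1) i := by
  intro i j hi hij
  induction j, hij using Nat.le_induction with
  | base => exact ⟨le_rfl, le_rfl⟩
  | succ j hij ih =>
    have h1 := hT.2.2 k hk1 hkN j (by omega)
    have h2 := hT.2.2 k hk1 hkN (j+1) (by omega)
    have i1 := ih.1
    have i2 := ih.2
    have a1 := h1.1
    have a2 := h1.2
    have a3 := h2.1
    exact ⟨by omega, by omega⟩

end PsiAux

open PsiAux in
theorem psi_closed_pochhammer_form (N : ℕ) (lam : ℕ → ℕ)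
    (hpart : ∀ i, 1 ≤ i → lam (i+1) ≤ lam i) (hsupp : ∀ i, N < i → lam i = 0)
    (Λ : ℕ → ℕ → ℕ) (hT : IsTab N lam Λ) :
    (∀ m r : ℕ,
      ι (PochInf (PowerSeries.X ^ m * PowerSeries.C (tv ^ (r+1)))) ≠ 0 ∧
      ι (PochInf (PowerSeries.X ^ (m+1) * PowerSeries.C (tv ^ r))) ≠ 0) ∧
    (∏ k ∈ Finset.Icc 1 N, ∏ i ∈ Finset.Icc 1 (k-1), ∏ j ∈ Finset.Icc i (k-1),
      (fMac (Λ (k-1) i - Λ (k-1) j) (j - i) * fMac (Λ k i - Λ k (j+1)) (j - i)) /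
      (fMac (Λ k i - Λ (k-1) j) (j - i) * fMac (Λ (k-1) i - Λ k (j+1)) (j - i)))
    = ∏ k ∈ Finset.Icc 1 N, ∏ i ∈ Finset.Icc 1 (k-1), ∏ j ∈ Finset.Icc i (k-1),
      (qPoch (qF ^ (-(Λ k i : ℤ) + (Λ (k-1) j : ℤ) + 1) * tF ^ ((i:ℤ) - (j:ℤ) - 1)) qF
          (Λ k i - Λ (k-1) i) /
       qPoch (qF ^ (-(Λ k i : ℤ) + (Λ (k-1) j : ℤ)) * tF ^ ((i:ℤ) - (j:ℤ))) qF
          (Λ k i - Λ (k-1) i)) *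
      (qPoch (qF ^ (-(Λ k i : ℤ) + (Λ k (j+1) : ℤ)) * tF ^ ((i:ℤ) - (j:ℤ))) qF
          (Λ k i - Λ (k-1) i) /
       qPoch (qF ^ (-(Λ k i : ℤ) + (Λ k (j+1) : ℤ) + 1) * tF ^ ((i:ℤ) - (j:ℤ) - 1)) qF
          (Λ k i - Λ (k-1) i)) := by
  constructor
  · intro m r
    exact ⟨g_ne (Or.inr (by omega)), g_ne (Or.inl (by omega))⟩
  · refine Finset.prod_congr rfl fun k hk => Finset.prod_congr rfl fun i hi =>
      Finset.prod_congr rfl fun j hj => ?_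
    rw [Finset.mem_Icc] at hk hi hj
    have hk1 : 1 ≤ k := hk.1
    have hkN : k ≤ N := hk.2
    have hi1 : 1 ≤ i := hi.1
    have hij : i ≤ j := hj.1
    -- key inequalities
    have hmono := tab_anti hT k hk1 hkN
    have hmu : Λ (k-1) j ≤ Λ (k-1) i := (hmono i j hi1 hij).2
    have hnu : Λ k (j+1) ≤ Λ k (i+1) := (hmono (i+1) (j+1) (by omega) (by omega)).1
    have hchain := hT.2.2 k hk1 hkN i hi1
    have hth : Λ (k-1) i ≤ Λ k i := hchain.1
    have hb : Λ k (i+1) ≤ Λ (k-1) i := hchain.2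
    have hnb : Λ k (j+1) ≤ Λ (k-1) i := le_trans hnu hb
    set θ := Λ k i - Λ (k-1) i with hθ
    set a1 := Λ (k-1) i - Λ (k-1) j with ha1
    set b0 := Λ (k-1) i - Λ k (j+1) with hb0
    set s := j - i with hs
    have E1 : Λ k i - Λ k (j+1) = b0 + θ := by omega
    have E2 : Λ k i - Λ (k-1) j = a1 + θ := by omega
    have Es : j - i = s := rfl
    have Z1 : -(Λ k i : ℤ) + (Λ (k-1) j : ℤ) + 1 = 1 - (a1:ℤ) - θ := by omega
    have Z2 : -(Λ k i : ℤ) + (Λ (k-1) j : ℤ) = -(a1:ℤ) - θ := by omega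
    have Z3 : -(Λ k i : ℤ) + (Λ k (j+1) : ℤ) = -(b0:ℤ) - θ := by omega
    have Z4 : -(Λ k i : ℤ) + (Λ k (j+1) : ℤ) + 1 = 1 - (b0:ℤ) - θ := by omega
    have Zs1 : (i:ℤ) - (j:ℤ) - 1 = -(s:ℤ) - 1 := by omega
    have Zs2 : (i:ℤ) - (j:ℤ) = -(s:ℤ) := by omega
    rw [E1, E2, Z1, Z2, Z4, Z3, Zs1, Zs2]
    exact term_eq θ a1 b0 s
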